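/- With 𝔳 an off-diagonal symmetric form relative to J on D, 𝔳' its dual form 𝔳'[x,y] = i·𝔳[x,Jy], and 𝔞_μ a positive definite form on D satisfying 𝔞_μ[Jx,Jy] = 𝔞_μ[x,y], the relative bounds coincide: sup_{x≠0} |𝔳'[x,x]|/𝔞_μ[x,x] = sup_{x≠0} |𝔳[x,x]|/𝔞_μ[x,x]. -/

import Mathlib

open scoped ComplexConjugate ENNReal

lemma sesq_expand_aux {H : Type*} [AddCommGroup H] [Module ℂ H] (D : Submodule ℂ H)
    (f : H → H → ℂ)
    (h1 : ∀ x y z, x ∈ D → y ∈ D → z ∈ D → f (x + y) z = f x z + f y z)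
    (h2 : ∀ x y z, x ∈ D → y ∈ D → z ∈ D → f x (y + z) = f x y + f x z)
    (h3 : ∀ (c : ℂ) (x y : H), x ∈ D → y ∈ D → f (c • x) y = conj c * f x y)
    (h4 : ∀ (c : ℂ) (x y : H), x ∈ D → y ∈ D → f x (c • y) = c * f x y)
    (a b c d : ℂ) (u w : H) (hu : u ∈ D) (hw : w ∈ D) :
    f (a • u + b • w) (c • u + d • w) =
      conj a * c * f u u + conj a * d * f u w + conj b * c * f w u + conj b * d * f w w := by
  have hau : a • u ∈ D := D.smul_mem _ hu
  have hbw : b • w ∈ D := D.smul_mem _ hw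
  have hcu : c • u ∈ D := D.smul_mem _ hu
  have hdw : d • w ∈ D := D.smul_mem _ hw
  rw [h1 _ _ _ hau hbw (D.add_mem hcu hdw),
      h2 _ _ _ hau hcu hdw, h2 _ _ _ hbw hcu hdw,
      h3 _ _ _ hu hcu, h3 _ _ _ hu hdw, h3 _ _ _ hw hcu, h3 _ _ _ hw hdw,
      h4 _ _ _ hu hu, h4 _ _ _ hu hw, h4 _ _ _ hw hu, h4 _ _ _ hw hw]
  ring

/-- For an off-diagonal symmetric form `v` relative to `J` on `D`, its dual
`v'[x,y] = i·v[x, Jy]`, and a positive definite `J`-invariant form `aμ` on `D`, the relative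
bounds coincide: `sup_{x≠0} |v'[x]|/aμ[x] = sup_{x≠0} |v[x]|/aμ[x]` (as extended reals). -/
theorem dual_offdiag_relative_bounds_eq
    {H : Type*} [NormedAddCommGroup H] [InnerProductSpace ℂ H] [CompleteSpace H]
    (J : H →L[ℂ] H) (hJsa : IsSelfAdjoint J) (hJ2 : ∀ x : H, J (J x) = x)
    (D : Submodule ℂ H) (hJD : ∀ x ∈ D, J x ∈ D)
    (aμ v : H → H → ℂ)
    -- aμ is a sesquilinear, symmetric, positive definite form on D, invariant under J
    (haadd₁ : ∀ x y z, x ∈ D → y ∈ D → z ∈ D → aμ (x + y) z = aμ x z + aμ y z)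
    (haadd₂ : ∀ x y z, x ∈ D → y ∈ D → z ∈ D → aμ x (y + z) = aμ x y + aμ x z)
    (hasmul₁ : ∀ (c : ℂ) (x y : H), x ∈ D → y ∈ D → aμ (c • x) y = conj c * aμ x y)
    (hasmul₂ : ∀ (c : ℂ) (x y : H), x ∈ D → y ∈ D → aμ x (c • y) = c * aμ x y)
    (hasym : ∀ x y, x ∈ D → y ∈ D → aμ x y = conj (aμ y x))
    (hapos : ∀ x, x ∈ D → x ≠ 0 → 0 < (aμ x x).re)
    (haJ : ∀ x y, x ∈ D → y ∈ D → aμ (J x) (J y) = aμ x y)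
    -- v is a sesquilinear, symmetric, off-diagonal form on D
    (hadd₁ : ∀ x y z, x ∈ D → y ∈ D → z ∈ D → v (x + y) z = v x z + v y z)
    (hadd₂ : ∀ x y z, x ∈ D → y ∈ D → z ∈ D → v x (y + z) = v x y + v x z)
    (hsmul₁ : ∀ (c : ℂ) (x y : H), x ∈ D → y ∈ D → v (c • x) y = conj c * v x y)
    (hsmul₂ : ∀ (c : ℂ) (x y : H), x ∈ D → y ∈ D → v x (c • y) = c * v x y)
    (hsym : ∀ x y, x ∈ D → y ∈ D → v x y = conj (v y x))
    (hoff : ∀ x y, x ∈ D → y ∈ D → v (J x) y = -v x (J y))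
    -- the dual form
    (v' : H → H → ℂ) (hv' : ∀ x y, v' x y = Complex.I * v x (J y)) :
    (⨆ x : {x : H // x ∈ D ∧ x ≠ 0},
        ENNReal.ofReal (‖v' x.1 x.1‖ / (aμ x.1 x.1).re)) =
      ⨆ x : {x : H // x ∈ D ∧ x ≠ 0},
        ENNReal.ofReal (‖v x.1 x.1‖ / (aμ x.1 x.1).re) := by
  have hcp : (starRingEnd ℂ) ((1 + Complex.I)/2) = (1 - Complex.I)/2 := by
    simp [map_div₀, map_ofNat, sub_eq_add_neg]
  have hcq : (starRingEnd ℂ) ((1 - Complex.I)/2) = (1 + Complex.I)/2 := by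
    simp [map_div₀, map_ofNat, sub_eq_add_neg]
  -- nonvanishing of the transformed vectors
  have hnz : ∀ (a b : ℂ), a + b = 1 → a - b ≠ 0 → ∀ x : H, x ≠ 0 → a • x + b • J x ≠ 0 := by
    intro a b hab hne x hx0 h
    have hJy : J (a • x + b • J x) = b • x + a • J x := by
      rw [map_add, map_smul, map_smul, hJ2]; exact add_comm _ _
    have h2 : b • x + a • J x = 0 := by rw [← hJy, h, map_zero]
    have h3 : x + J x = (a • x + b • J x) + (b • x + a • J x) := by
      match_scalars <;> linear_combination -hab
    rw [h, h2, add_zero] at h3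
    have hJx : J x = -x := by rwa [add_comm, add_eq_zero_iff_eq_neg] at h3
    rw [hJx, smul_neg] at h
    have h4 : (a - b) • x = 0 := by rw [sub_smul, sub_eq_add_neg]; exact h
    exact hx0 ((smul_eq_zero.mp h4).resolve_left hne)
  -- invariance of aμ under x ↦ a•x + b•Jx for suitable a, b
  have keyA : ∀ (a b : ℂ), (starRingEnd ℂ) a = b → 2 * (a * b) = 1 → a ^ 2 + b ^ 2 = 0 →
      ∀ x, x ∈ D → aμ (a • x + b • J x) (a • x + b • J x) = aμ x x := by
    intro a b hca hab hsq x hxD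
    have hJx : J x ∈ D := hJD x hxD
    have hcb : (starRingEnd ℂ) b = a := by rw [← hca, Complex.conj_conj]
    have hB : aμ (J x) x = aμ x (J x) := by
      have := haJ x (J x) hxD hJx; rwa [hJ2] at this
    have hA : aμ (J x) (J x) = aμ x x := haJ x x hxD hxD
    rw [sesq_expand_aux D aμ haadd₁ haadd₂ hasmul₁ hasmul₂ a b a b x (J x) hxD hJx,
        hca, hcb, hB, hA]
    linear_combination aμ x x * hab + aμ x (J x) * hsq
  have hpq1 : ((1 + Complex.I)/2) + ((1 - Complex.I)/2) = 1 := by ring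
  have hqp1 : ((1 - Complex.I)/2) + ((1 + Complex.I)/2) = 1 := by ring
  have hpqI : ((1 + Complex.I)/2) - ((1 - Complex.I)/2) = Complex.I := by ring
  have hqpI : ((1 - Complex.I)/2) - ((1 + Complex.I)/2) = -Complex.I := by ring
  have hpqm : 2 * (((1 + Complex.I)/2) * ((1 - Complex.I)/2)) = 1 := by
    linear_combination (-(1:ℂ)/2) * Complex.I_sq
  have hqpm : 2 * (((1 - Complex.I)/2) * ((1 + Complex.I)/2)) = 1 := by
    linear_combination (-(1:ℂ)/2) * Complex.I_sq
  have hpqs : ((1 + Complex.I)/2) ^ 2 + ((1 - Complex.I)/2) ^ 2 = 0 := by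
    linear_combination ((1:ℂ)/2) * Complex.I_sq
  have hqps : ((1 - Complex.I)/2) ^ 2 + ((1 + Complex.I)/2) ^ 2 = 0 := by
    linear_combination ((1:ℂ)/2) * Complex.I_sq
  apply le_antisymm
  · -- sup v' ≤ sup v : use z = q•x + p•Jx
    apply iSup_le
    rintro ⟨x, hxD, hx0⟩
    set p : ℂ := (1 + Complex.I)/2 with hp
    set q : ℂ := (1 - Complex.I)/2 with hq
    have hJx : J x ∈ D := hJD x hxD
    set z : H := q • x + p • J x with hz
    have hzD : z ∈ D := D.add_mem (D.smul_mem _ hxD) (D.smul_mem _ hJx)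
    have hz0 : z ≠ 0 := hnz q p hqp1 (by rw [hqpI]; simpa using Complex.I_ne_zero) x hx0
    have haz : aμ z z = aμ x x := keyA q p hcq hqpm hqps x hxD
    have hvz : v z z = v' x x := by
      rw [hz, sesq_expand_aux D v hadd₁ hadd₂ hsmul₁ hsmul₂ q p q p x (J x) hxD hJx,
          hcp, hcq, hoff x x hxD hxD,
          (by rw [hoff x (J x) hxD hJx, hJ2] : v (J x) (J x) = -v x x),
          hv' x x]
      ring
    exact le_iSup_of_le ⟨z, hzD, hz0⟩ (le_of_eq (by rw [hvz, haz]))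
  · -- sup v ≤ sup v' : use y = p•x + q•Jx
    apply iSup_le
    rintro ⟨x, hxD, hx0⟩
    set p : ℂ := (1 + Complex.I)/2 with hp
    set q : ℂ := (1 - Complex.I)/2 with hq
    have hJx : J x ∈ D := hJD x hxD
    set y : H := p • x + q • J x with hy
    have hyD : y ∈ D := D.add_mem (D.smul_mem _ hxD) (D.smul_mem _ hJx)
    have hy0 : y ≠ 0 := hnz p q hpq1 (by rw [hpqI]; exact Complex.I_ne_zero) x hx0
    have hay : aμ y y = aμ x x := keyA p q hcp hpqm hpqs x hxD
    have hJy : J y = q • x + p • J x := by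
      rw [hy, map_add, map_smul, map_smul, hJ2]; exact add_comm _ _
    have hvy : v' y y = v x x := by
      rw [hv' y y, hJy, hy,
          sesq_expand_aux D v hadd₁ hadd₂ hsmul₁ hsmul₂ p q q p x (J x) hxD hJx,
          hcp, hcq, hoff x x hxD hxD,
          (by rw [hoff x (J x) hxD hJx, hJ2] : v (J x) (J x) = -v x x)]
      linear_combination (- v x x) * Complex.I_sq
    exact le_iSup_of_le ⟨y, hyD, hy0⟩ (le_of_eq (by rw [hvy, hay]))
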